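/- There is a bijection between acyclic orientations of Γ_a and placements of n non-attacking rooks on the Ferrers board with row lengths r_i = a_i + i, which sends the number of ascending edges of the orientation in row i to the number of inversions of the rook placement in row i, for every row i. -/

import Mathlib

open Finset

/-- The edge set of the unit interval graph `Γ_a` on vertices `Fin n` (0-indexed):
edges `i → j` for `i < j ≤ i + a i`. -/
def uigEdges (n : ℕ) (a : Fin n → ℕ) : Finset (Fin n × Fin n) :=
  Finset.univ.filter (fun p => p.1 < p.2 ∧ (p.2 : ℕ) ≤ (p.1 : ℕ) + a p.1)

/-- The directed relation induced by the orientation of `Γ_a` whose set of ascending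
edges is `A ⊆ uigEdges n a`. -/
def orientRel (n : ℕ) (a : Fin n → ℕ) (A : Finset (Fin n × Fin n))
    (u w : Fin n) : Prop :=
  (u, w) ∈ A ∨ ((w, u) ∈ uigEdges n a ∧ (w, u) ∉ A)

/-- The number of inversions of a rook placement `σ` in row `i` of the Ferrers board
with row lengths `r i = a i + i + 1` (0-indexed): cells `(i,j)` of the board with no rook
on them or to their left in row `i` (i.e. `j < σ i`) and no rook above them in column `j`. -/
def rookInvRow (n : ℕ) (a : Fin n → ℕ) (σ : Equiv.Perm (Fin n)) (i : Fin n) : ℕ :=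
  ((Finset.range (a i + (i : ℕ) + 1)).filter
    (fun j => j < (σ i : ℕ) ∧ ∀ i' : Fin n, i' < i → (σ i' : ℕ) ≠ j)).card


namespace AORP

open scoped Classical

/-- decode: `dec t i` is the `t i`-th (0-indexed) column not used by rows `< i`. -/
noncomputable def dec (t : ℕ → ℕ) : ℕ → ℕ
  | i => Nat.nth (fun x => ∀ j, ∀ _ : j < i, dec t j ≠ x) (t i)
  termination_by i => i
  decreasing_by exact ‹_›

def frP (t : ℕ → ℕ) (i : ℕ) (x : ℕ) : Prop := ∀ j, j < i → dec t j ≠ x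

lemma dec_eq (t : ℕ → ℕ) (i : ℕ) : dec t i = Nat.nth (frP t i) (t i) := by
  conv_lhs => rw [dec]
  rfl

lemma frP_infinite (t : ℕ → ℕ) (i : ℕ) : (setOf (frP t i)).Infinite := by
  have h : setOf (frP t i) = ((dec t) '' (Set.Iio i))ᶜ := by
    ext x; simp only [Set.mem_setOf_eq, Set.mem_compl_iff, Set.mem_image, Set.mem_Iio, frP,
      not_exists]
    constructor
    · rintro h j ⟨hj, hx⟩; exact h j hj hx
    · intro h j hj hx; exact h j ⟨hj, hx⟩
  rw [h]
  exact Set.Finite.infinite_compl ((Set.finite_Iio i).image _)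

lemma dec_mem (t : ℕ → ℕ) (i : ℕ) : frP t i (dec t i) := by
  rw [dec_eq]; exact Nat.nth_mem_of_infinite (frP_infinite t i) _

lemma dec_count (t : ℕ → ℕ) (i : ℕ) : Nat.count (frP t i) (dec t i) = t i := by
  rw [dec_eq]; exact Nat.count_nth_of_infinite (frP_infinite t i) _

lemma dec_ne (t : ℕ → ℕ) {j i : ℕ} (h : j < i) : dec t j ≠ dec t i :=
  dec_mem t i j h

lemma dec_lt (n : ℕ) (a t : ℕ → ℕ) (ht : ∀ i, i < n → t i ≤ a i) :
    ∀ i, i < n → dec t i < a i + i + 1 := by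
  intro i hi
  rw [dec_eq]
  apply Nat.nth_lt_of_lt_count
  have hcard : (Finset.range (a i + i + 1)).filter (fun x => ¬ frP t i x) ⊆
      (Finset.range i).image (dec t) := by
    intro x hx
    simp only [Finset.mem_filter, frP, not_forall] at hx
    obtain ⟨-, j, hj, hjx⟩ := hx
    simp only [Finset.mem_image, Finset.mem_range]
    exact ⟨j, hj, by omega⟩
  have h1 : ((Finset.range (a i + i + 1)).filter (fun x => ¬ frP t i x)).card ≤ i :=
    le_trans (Finset.card_le_card hcard) (le_trans Finset.card_image_le (by simp))
  have h2 := Finset.card_filter_add_card_filter_not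
    (s := Finset.range (a i + i + 1)) (p := frP t i)
  rw [Nat.count_eq_card_filter_range]
  have := ht i hi
  simp only [Finset.card_range] at h2
  have hfg : (Finset.filter (frP t i) (Finset.range (a i + i + 1))).card
      = (Finset.filter (fun x => frP t i x) (Finset.range (a i + i + 1))).card := rfl
  omega

lemma dec_injOn (t : ℕ → ℕ) {i j : ℕ} (h : i ≠ j) : dec t i ≠ dec t j := by
  rcases h.lt_or_gt with h | h
  · exact (dec_ne t h).symm ∘ Eq.symm
  · exact fun hx => (dec_ne t h) hx.symm

def rookInvRow' (n : ℕ) (a : Fin n → ℕ) (σ : Equiv.Perm (Fin n)) (i : Fin n) : ℕ :=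
  ((Finset.range (a i + (i : ℕ) + 1)).filter
    (fun j => j < (σ i : ℕ) ∧ ∀ i' : Fin n, i' < i → (σ i' : ℕ) ≠ j)).card

lemma rookInvRow'_eq_count (n : ℕ) (a : Fin n → ℕ) (σ : Equiv.Perm (Fin n)) (i : Fin n)
    (hσ : (σ i : ℕ) < a i + (i : ℕ) + 1) :
    rookInvRow' n a σ i
      = ((Finset.range (σ i : ℕ)).filter (fun j => ∀ i' : Fin n, i' < i → (σ i' : ℕ) ≠ j)).card := by
  rw [rookInvRow']
  congr 1
  ext j
  simp only [Finset.mem_filter, Finset.mem_range]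
  constructor
  · rintro ⟨-, h2, h3⟩; exact ⟨h2, h3⟩
  · rintro ⟨h1, h2⟩; exact ⟨by omega, h1, h2⟩

lemma card_filter_lt_fin (n : ℕ) (i : Fin n) :
    (Finset.univ.filter (fun i' : Fin n => i' < i)).card = (i : ℕ) := by
  have h : Finset.univ.filter (fun i' : Fin n => i' < i) = Finset.Iio i := by
    ext i'; simp
  rw [h, Fin.card_Iio]

/-- upper bound on the number of inversions in a row -/
lemma rookInvRow'_le (n : ℕ) (a : Fin n → ℕ) (σ : Equiv.Perm (Fin n)) (i : Fin n)
    (hmono : ∀ i' : Fin n, i' ≤ i → a i' + (i' : ℕ) ≤ a i + (i : ℕ))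
    (hσ : ∀ i' : Fin n, (σ i' : ℕ) < a i' + (i' : ℕ) + 1) :
    rookInvRow' n a σ i ≤ a i := by
  rw [rookInvRow'_eq_count n a σ i (hσ i)]
  set s := (σ i : ℕ) with hs
  set P : ℕ → Prop := fun j => ∀ i' : Fin n, i' < i → (σ i' : ℕ) ≠ j with hP
  have hsplit := Finset.card_filter_add_card_filter_not
    (s := Finset.range s) (p := P)
  -- occupied cells below s are the images of earlier rows
  set K := Finset.univ.filter (fun i' : Fin n => i' < i ∧ (σ i' : ℕ) < s) with hK
  set K' := Finset.univ.filter (fun i' : Fin n => i' < i ∧ s < (σ i' : ℕ)) with hK'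
  have hKocc : K.card ≤ ((Finset.range s).filter (fun j => ¬ P j)).card := by
    apply Finset.card_le_card_of_injOn (fun i' => (σ i' : ℕ))
    · intro i' hi'
      simp only [Finset.mem_coe] at hi' ⊢
      rw [hK, Finset.mem_filter] at hi'
      obtain ⟨-, h1, h2⟩ := hi'
      rw [Finset.mem_filter, Finset.mem_range]
      refine ⟨h2, ?_⟩
      intro hcon
      exact hcon i' h1 rfl
    · intro x _ y _ hxy
      exact σ.injective (Fin.ext hxy)
  have hKK' : K.card + K'.card = (i : ℕ) := by
    have h1 : Finset.univ.filter (fun i' : Fin n => i' < i ∧ ¬ ((σ i' : ℕ) < s)) = K' := by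
      rw [hK']
      apply Finset.filter_congr
      intro i' _
      constructor
      · rintro ⟨h1, h2⟩
        refine ⟨h1, ?_⟩
        rcases Nat.lt_or_ge s (σ i' : ℕ) with h | h
        · exact h
        · exfalso
          have : (σ i' : ℕ) = s := by omega
          exact absurd (σ.injective (Fin.ext this)) (Fin.ne_of_lt h1)
      · rintro ⟨h1, h2⟩; exact ⟨h1, by omega⟩
    have h2 := Finset.card_filter_add_card_filter_not
      (s := Finset.univ.filter (fun i' : Fin n => i' < i)) (p := fun i' => (σ i' : ℕ) < s)
    rw [Finset.filter_filter, Finset.filter_filter] at h2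
    rw [card_filter_lt_fin] at h2
    rw [hK]
    rw [← h1]
    exact h2
  have hK'le : K'.card ≤ a i + (i : ℕ) - s := by
    have : K'.card ≤ (Finset.Ioc s (a i + (i : ℕ))).card := by
      apply Finset.card_le_card_of_injOn (fun i' => (σ i' : ℕ))
      · intro i' hi'
        simp only [Finset.mem_coe] at hi' ⊢
        rw [hK', Finset.mem_filter] at hi'
        obtain ⟨-, h1, h2⟩ := hi'
        rw [Finset.mem_Ioc]
        refine ⟨h2, ?_⟩
        have hb := hσ i'
        have hm := hmono i' h1.le
        omega
      · intro x _ y _ hxy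
        exact σ.injective (Fin.ext hxy)
    rwa [Nat.card_Ioc] at this
  have hbound := hσ i
  rw [← hs] at hbound
  simp only [Finset.card_range] at hsplit
  have hgj : (Finset.filter P (Finset.range s)).card
      = ((Finset.range s).filter (fun j => ∀ i' : Fin n, i' < i → (σ i' : ℕ) ≠ j)).card := rfl
  omega

lemma rank_eq_inj {P : ℕ → Prop} [DecidablePred P] {x y : ℕ} (hx : P x) (hy : P y)
    (h : ((Finset.range x).filter P).card = ((Finset.range y).filter P).card) : x = y := by
  have key : ∀ u v : ℕ, u < v → P u →
      ((Finset.range u).filter P).card < ((Finset.range v).filter P).card := by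
    intro u v huv hu
    apply Finset.card_lt_card
    rw [Finset.ssubset_iff_of_subset
      (Finset.filter_subset_filter _ (Finset.range_subset_range.mpr huv.le))]
    exact ⟨u, Finset.mem_filter.mpr ⟨Finset.mem_range.mpr huv, hu⟩,
      fun hc => by simp at hc⟩
  rcases lt_trichotomy x y with hlt | he | hlt
  · exact absurd h (key x y hlt hx).ne
  · exact he
  · exact absurd h.symm (key y x hlt hy).ne

lemma rook_inj (n : ℕ) (a : Fin n → ℕ) (σ τ : Equiv.Perm (Fin n))
    (hσ : ∀ i : Fin n, (σ i : ℕ) < a i + (i : ℕ) + 1)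
    (hτ : ∀ i : Fin n, (τ i : ℕ) < a i + (i : ℕ) + 1)
    (h : ∀ i : Fin n, rookInvRow' n a σ i = rookInvRow' n a τ i) : σ = τ := by
  have key : ∀ m : ℕ, ∀ i : Fin n, (i : ℕ) = m → σ i = τ i := by
    intro m
    induction m using Nat.strong_induction_on with
    | _ m IH =>
      rintro i rfl
      have hIH : ∀ i' : Fin n, i' < i → σ i' = τ i' := fun i' hi' => IH i' hi' i' rfl
      have hPe : ∀ j : ℕ, (∀ i' : Fin n, i' < i → (σ i' : ℕ) ≠ j)
          ↔ (∀ i' : Fin n, i' < i → (τ i' : ℕ) ≠ j) := by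
        intro j
        constructor
        · intro h' i' hi'
          rw [← hIH i' hi']
          exact h' i' hi'
        · intro h' i' hi'
          rw [hIH i' hi']
          exact h' i' hi'
      have hx : ∀ i' : Fin n, i' < i → (σ i' : ℕ) ≠ (σ i : ℕ) :=
        fun i' hi' hc => (Fin.ne_of_lt hi') (σ.injective (Fin.ext hc))
      have hy : ∀ i' : Fin n, i' < i → (σ i' : ℕ) ≠ (τ i : ℕ) := by
        refine (hPe (τ i : ℕ)).mpr ?_
        exact fun i' hi' hc => (Fin.ne_of_lt hi') (τ.injective (Fin.ext hc))
      have hcnt := h i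
      rw [rookInvRow'_eq_count n a σ i (hσ i), rookInvRow'_eq_count n a τ i (hτ i)] at hcnt
      rw [Finset.filter_congr (fun j _ => (hPe j).symm)] at hcnt
      exact Fin.ext (rank_eq_inj hx hy hcnt)
  exact Equiv.ext fun i => key (i : ℕ) i rfl

lemma rook_surj (n : ℕ) (a : Fin n → ℕ)
    (harea₁ : ∀ i : Fin n, (i : ℕ) + a i < n)
    (t : ∀ i : Fin n, Fin (a i + 1)) :
    ∃ σ : Equiv.Perm (Fin n), (∀ i : Fin n, (σ i : ℕ) < a i + (i : ℕ) + 1) ∧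
      ∀ i : Fin n, rookInvRow' n a σ i = t i := by
  set tN : ℕ → ℕ := fun v => if h : v < n then (t ⟨v, h⟩ : ℕ) else 0 with htN
  set aN : ℕ → ℕ := fun v => if h : v < n then a ⟨v, h⟩ else 0 with haN
  have hdl : ∀ v, v < n → dec tN v < aN v + v + 1 := by
    apply dec_lt
    intro v hv
    simp only [htN, haN, dif_pos hv]
    exact Nat.lt_succ_iff.mp (t ⟨v, hv⟩).isLt
  have hdl' : ∀ i : Fin n, dec tN (i : ℕ) < a i + (i : ℕ) + 1 := by
    intro i
    have := hdl (i : ℕ) i.isLt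
    simp only [haN, dif_pos i.isLt, Fin.eta] at this
    exact this
  have hfb : ∀ i : Fin n, dec tN (i : ℕ) < n := by
    intro i
    have h1 := hdl' i
    have h2 := harea₁ i
    omega
  set f : Fin n → Fin n := fun i => ⟨dec tN (i : ℕ), hfb i⟩ with hf
  have hinjf : Function.Injective f := by
    intro i j hij
    by_contra hne
    have hval : dec tN (i : ℕ) = dec tN (j : ℕ) := congrArg Fin.val hij
    exact dec_injOn tN (fun hc => hne (Fin.ext hc)) hval
  obtain ⟨σ, hσf⟩ : ∃ σ : Equiv.Perm (Fin n), ∀ i, σ i = f i :=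
    ⟨Equiv.ofBijective f ((Finite.injective_iff_bijective).mp hinjf), fun i => rfl⟩
  have hbound : ∀ i : Fin n, (σ i : ℕ) < a i + (i : ℕ) + 1 := by
    intro i
    rw [hσf i]
    exact hdl' i
  refine ⟨σ, hbound, ?_⟩
  intro i
  rw [rookInvRow'_eq_count n a σ i (hbound i)]
  have hcongr : ∀ j : ℕ, (∀ i' : Fin n, i' < i → (σ i' : ℕ) ≠ j) ↔ frP tN (i : ℕ) j := by
    intro j
    constructor
    · intro h' v hv
      have hvn : v < n := lt_trans hv i.isLt
      have := h' ⟨v, hvn⟩ hv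
      rwa [hσf] at this
    · intro h' i' hi'
      rw [hσf]
      exact h' (i' : ℕ) hi'
  have hcc := Nat.count_eq_card_filter_range (p := frP tN (i : ℕ)) (dec tN (i : ℕ))
  have hcd := dec_count tN (i : ℕ)
  have hfr : ((Finset.range (dec tN (i : ℕ))).filter (frP tN (i : ℕ))).card = tN (i : ℕ) := by
    rw [← hcc] at *
    omega
  have hσv : (σ i : ℕ) = dec tN (i : ℕ) := by rw [hσf]
  have hQ : (Finset.range (σ i : ℕ)).filter (fun j => ∀ i' : Fin n, i' < i → (σ i' : ℕ) ≠ j)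
      = (Finset.range (σ i : ℕ)).filter (frP tN (i : ℕ)) :=
    Finset.filter_congr (fun j _ => hcongr j)
  rw [hQ, hσv, hfr, htN]
  simp only [dif_pos i.isLt, Fin.eta]

noncomputable def posStep (t : ℕ → ℕ) (ε : ℚ) (v : ℕ) (S : Finset ℚ) : ℚ :=
  if t v = 0 then (insert (0:ℚ) S).max' (Finset.insert_nonempty _ _) + 1
  else (S.filter (fun z => (S.filter (fun w => z < w)).card < t v)).min.untopD 0 - ε

/-- Recursive position function: vertex `v` gets a rational "height" so that exactly
`t v` of its upper neighbours are strictly higher. -/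
noncomputable def posQ (n : ℕ) (a t : ℕ → ℕ) : ℕ → ℚ
  | v =>
    if _h : v < n then
      posStep t ((2:ℚ) ^ (n - v))⁻¹ v
        ((Finset.Ioc v (v + a v)).attach.image (fun k => posQ n a t k.1))
    else 0
  termination_by v => n - v
  decreasing_by
    all_goals (have := (Finset.mem_Ioc.mp k.2).1; omega)

noncomputable def posS (n : ℕ) (a t : ℕ → ℕ) (v : ℕ) : Finset ℚ :=
  (Finset.Ioc v (v + a v)).image (posQ n a t)

noncomputable def posY (n : ℕ) (a t : ℕ → ℕ) (v : ℕ) : Finset ℚ :=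
  (posS n a t v).filter (fun z => ((posS n a t v).filter (fun w => z < w)).card < t v)

noncomputable def posy (n : ℕ) (a t : ℕ → ℕ) (v : ℕ) : ℚ :=
  (posY n a t v).min.untopD 0

lemma attach_image_posQ (n : ℕ) (a t : ℕ → ℕ) (v : ℕ) :
    (Finset.Ioc v (v + a v)).attach.image (fun k => posQ n a t k.1) = posS n a t v := by
  ext b
  simp [posS, Finset.mem_image]

lemma posQ_eq (n : ℕ) (a t : ℕ → ℕ) {v : ℕ} (h : v < n) :
    posQ n a t v =
      if t v = 0 then
        (insert (0:ℚ) (posS n a t v)).max' (Finset.insert_nonempty _ _) + 1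
      else posy n a t v - ((2:ℚ) ^ (n - v))⁻¹ := by
  conv_lhs => rw [posQ]
  rw [dif_pos h, attach_image_posQ]
  rfl

lemma card_split (S : Finset ℚ) {x : ℚ} (hx : x ∈ S) :
    (S.filter (fun w => x < w)).card + (S.filter (fun w => w < x)).card + 1 = S.card := by
  have h1 : S.filter (fun w => ¬ x < w) = insert x (S.filter (fun w => w < x)) := by
    ext w
    simp only [Finset.mem_filter, Finset.mem_insert, not_lt]
    constructor
    · rintro ⟨hw, hle⟩
      rcases hle.lt_or_eq with h | h
      · exact Or.inr ⟨hw, h⟩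
      · exact Or.inl h
    · rintro (rfl | ⟨hw, h⟩)
      · exact ⟨hx, le_refl _⟩
      · exact ⟨hw, h.le⟩
  have h2 := Finset.card_filter_add_card_filter_not (s := S) (p := fun w => x < w)
  rw [h1, Finset.card_insert_of_notMem (by simp)] at h2
  omega

lemma filter_le_eq_insert (S : Finset ℚ) {x : ℚ} (hx : x ∈ S) :
    S.filter (fun w => x ≤ w) = insert x (S.filter (fun w => x < w)) := by
  ext w
  simp only [Finset.mem_filter, Finset.mem_insert]
  constructor
  · rintro ⟨hw, hle⟩
    rcases hle.lt_or_eq with h | h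
    · exact Or.inr ⟨hw, h⟩
    · exact Or.inl h.symm
  · rintro (rfl | ⟨hw, h⟩)
    · exact ⟨hx, le_refl _⟩
    · exact ⟨hw, h.le⟩

lemma div_pow_eq_cancel (x y : ℚ) {D : ℚ} (hD : D ≠ 0) (h : x / D = y / D) : x = y := by
  rw [div_eq_div_iff hD hD] at h
  exact mul_right_cancel₀ hD h

lemma posQ_master (n : ℕ) (a t : ℕ → ℕ)
    (ha : ∀ v, v < n → v + a v < n)
    (rmono : ∀ i j, i ≤ j → j < n → a i + i ≤ a j + j)
    (ht : ∀ v, v < n → t v ≤ a v) :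
    ∀ m v, n - v ≤ m → v < n →
      (∃ z : ℤ, posQ n a t v = (z : ℚ) / 2 ^ (n - v)) ∧
      (∀ k, v < k → k ≤ v + a v → posQ n a t v ≠ posQ n a t k) ∧
      ((Finset.Ioc v (v + a v)).filter
        (fun k => posQ n a t v < posQ n a t k)).card = t v := by
  intro m
  induction m with
  | zero => intro v hm hv; omega
  | succ m IH =>
    intro v hm hv
    have hav := ha v hv
    have htv := ht v hv
    have hIH : ∀ k, v < k → k ≤ v + a v →
        (∃ z : ℤ, posQ n a t k = (z : ℚ) / 2 ^ (n - k)) ∧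
        (∀ k', k < k' → k' ≤ k + a k → posQ n a t k ≠ posQ n a t k') := by
      intro k h1 h2
      have hk : k < n := by omega
      have := IH k (by omega) hk
      exact ⟨this.1, this.2.1⟩
    have hinj : Set.InjOn (posQ n a t) (Finset.Ioc v (v + a v)) := by
      intro j hj k hk heq
      simp only [Finset.coe_Ioc, Set.mem_Ioc] at hj hk
      by_contra hne
      rcases Ne.lt_or_gt hne with h | h
      · exact (hIH j hj.1 hj.2).2 k h
          (le_trans hk.2 (by have := rmono v j hj.1.le (by omega); omega)) heq
      · exact (hIH k hk.1 hk.2).2 j h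
          (le_trans hj.2 (by have := rmono v k hk.1.le (by omega); omega)) heq.symm
    have hScard : (posS n a t v).card = a v := by
      rw [posS, Finset.card_image_of_injOn hinj, Nat.card_Ioc]
      omega
    set d := n - v - 1 with hd
    have hnv : n - v = d + 1 := by omega
    have hpowpos : (0:ℚ) < 2 ^ d := by positivity
    have hpow1pos : (0:ℚ) < 2 ^ (d+1) := by positivity
    have hgrid : ∀ s ∈ posS n a t v, ∃ z : ℤ, s = (z : ℚ) / 2 ^ d := by
      intro s hs
      rw [posS, Finset.mem_image] at hs
      obtain ⟨k, hk, rfl⟩ := hs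
      rw [Finset.mem_Ioc] at hk
      obtain ⟨z, hz⟩ := (hIH k hk.1 hk.2).1
      refine ⟨z * 2 ^ (k - v - 1), ?_⟩
      have hpow : (2:ℚ) ^ d = 2 ^ (n - k) * 2 ^ (k - v - 1) := by
        rw [← pow_add]; congr 1; omega
      rw [hz, hpow]
      push_cast
      rw [div_eq_div_iff (by positivity) (by positivity)]
      ring
    have hcount : ∀ x : ℚ,
        ((Finset.Ioc v (v + a v)).filter (fun k => x < posQ n a t k)).card
          = ((posS n a t v).filter (fun s => x < s)).card := by
      intro x
      rw [posS, Finset.filter_image]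
      exact (Finset.card_image_of_injOn (hinj.mono (Finset.filter_subset _ _))).symm
    by_cases h0 : t v = 0
    · -- t v = 0 : v goes above everything
      have hval : posQ n a t v
          = (insert (0:ℚ) (posS n a t v)).max' (Finset.insert_nonempty _ _) + 1 := by
        rw [posQ_eq n a t hv, if_pos h0]
      have hMge : ∀ s ∈ posS n a t v,
          s ≤ (insert (0:ℚ) (posS n a t v)).max' (Finset.insert_nonempty _ _) :=
        fun s hs => Finset.le_max' _ s (Finset.mem_insert_of_mem hs)
      have hgt : ∀ k, v < k → k ≤ v + a v → posQ n a t k < posQ n a t v := by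
        intro k h1 h2
        have hmem : posQ n a t k ∈ posS n a t v :=
          Finset.mem_image_of_mem _ (Finset.mem_Ioc.mpr ⟨h1, h2⟩)
        have := hMge _ hmem
        rw [hval]
        linarith
      refine ⟨?_, fun k h1 h2 => (hgt k h1 h2).ne', ?_⟩
      · have hM := Finset.max'_mem (insert (0:ℚ) (posS n a t v)) (Finset.insert_nonempty _ _)
        rw [Finset.mem_insert] at hM
        rcases hM with hM | hM
        · refine ⟨2 ^ (n - v), ?_⟩
          rw [hval, hM]
          push_cast
          rw [div_self (by positivity)]
          norm_num
        · obtain ⟨z, hz⟩ := hgrid _ hM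
          refine ⟨2 * z + 2 ^ (d + 1), ?_⟩
          rw [hval, hz, hnv]
          push_cast
          field_simp
          ring
      · rw [h0, Finset.card_eq_zero, Finset.filter_eq_empty_iff]
        intro k hk
        rw [Finset.mem_Ioc] at hk
        exact not_lt.mpr (hgt k hk.1 hk.2).le
    · -- t v ≥ 1
      have hSne : (posS n a t v).Nonempty := by
        rw [← Finset.card_pos, hScard]; omega
      have hYne : (posY n a t v).Nonempty := by
        refine ⟨(posS n a t v).max' hSne, ?_⟩
        rw [posY, Finset.mem_filter]
        refine ⟨Finset.max'_mem _ _, ?_⟩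
        have hemp : (posS n a t v).filter (fun w => (posS n a t v).max' hSne < w) = ∅ := by
          rw [Finset.filter_eq_empty_iff]
          exact fun w hw => not_lt.mpr (Finset.le_max' _ w hw)
        rw [hemp]
        simp only [Finset.card_empty]
        omega
      have hymin : posy n a t v = (posY n a t v).min' hYne := by
        rw [posy, ← Finset.coe_min' hYne, WithTop.untopD_coe]
      have hyY : posy n a t v ∈ posY n a t v := by
        rw [hymin]; exact Finset.min'_mem _ _
      have hyY' := hyY
      rw [posY, Finset.mem_filter] at hyY'
      obtain ⟨hyS, hc⟩ := hyY'
      have hsplit := card_split (posS n a t v) hyS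
      have hc' : ((posS n a t v).filter (fun w => posy n a t v < w)).card + 1 = t v := by
        by_contra hne
        have hlt : ((posS n a t v).filter (fun w => posy n a t v < w)).card + 1 < t v := by
          omega
        have hBne : ((posS n a t v).filter (fun w => w < posy n a t v)).Nonempty := by
          rw [← Finset.card_pos]
          omega
        obtain ⟨y', hy'mem, hy'max⟩ :
            ∃ y', y' ∈ (posS n a t v).filter (fun w => w < posy n a t v) ∧
              ∀ w ∈ (posS n a t v).filter (fun w => w < posy n a t v), w ≤ y' :=
          ⟨_, Finset.max'_mem _ hBne, fun w hw => Finset.le_max' _ w hw⟩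
        obtain ⟨hy'S, hy'lt⟩ := Finset.mem_filter.mp hy'mem
        have hfe : (posS n a t v).filter (fun w => y' < w)
            = insert (posy n a t v) ((posS n a t v).filter (fun w => posy n a t v < w)) := by
          ext w
          simp only [Finset.mem_filter, Finset.mem_insert]
          constructor
          · rintro ⟨hwS, hw⟩
            rcases lt_trichotomy w (posy n a t v) with h | h | h
            · exact absurd hw (not_lt.mpr (hy'max w (Finset.mem_filter.mpr ⟨hwS, h⟩)))
            · exact Or.inl h
            · exact Or.inr ⟨hwS, h⟩
          · rintro (rfl | ⟨hwS, hw⟩)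
            · exact ⟨hyS, hy'lt⟩
            · exact ⟨hwS, lt_trans hy'lt hw⟩
        have hy'Y : y' ∈ posY n a t v := by
          rw [posY, Finset.mem_filter]
          refine ⟨hy'S, ?_⟩
          rw [hfe, Finset.card_insert_of_notMem (by simp)]
          omega
        have hmle := Finset.min'_le _ y' hy'Y
        rw [← hymin] at hmle
        exact absurd hy'lt (not_lt.mpr hmle)
      have hval : posQ n a t v = posy n a t v - ((2:ℚ) ^ (n - v))⁻¹ := by
        rw [posQ_eq n a t hv, if_neg h0]
      obtain ⟨z, hz⟩ := hgrid _ hyS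
      have hvz : posQ n a t v = ((2 * z - 1 : ℤ) : ℚ) / 2 ^ (d + 1) := by
        rw [hval, hz, hnv]
        push_cast
        field_simp
        ring
      have hs2 : ∀ s ∈ posS n a t v, ∃ zs : ℤ, s = ((2 * zs : ℤ) : ℚ) / 2 ^ (d + 1)
          ∧ (posy n a t v ≤ s ↔ z ≤ zs) := by
        intro s hs
        obtain ⟨zs, hzs⟩ := hgrid _ hs
        refine ⟨zs, ?_, ?_⟩
        · rw [hzs]
          push_cast
          rw [div_eq_div_iff hpowpos.ne' hpow1pos.ne']
          ring
        · rw [hz, hzs, div_le_div_iff_of_pos_right hpowpos, Int.cast_le]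
      have hcomp : ∀ s ∈ posS n a t v, (posQ n a t v < s ↔ posy n a t v ≤ s) := by
        intro s hs
        obtain ⟨zs, hzs, hiff⟩ := hs2 s hs
        rw [hiff, hvz, hzs, div_lt_div_iff_of_pos_right hpow1pos, Int.cast_lt]
        omega
      have hne : ∀ k, v < k → k ≤ v + a v → posQ n a t v ≠ posQ n a t k := by
        intro k h1 h2 heq
        have hmem : posQ n a t k ∈ posS n a t v :=
          Finset.mem_image_of_mem _ (Finset.mem_Ioc.mpr ⟨h1, h2⟩)
        obtain ⟨zk, hzk, -⟩ := hs2 _ hmem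
        rw [hvz, hzk] at heq
        have := div_pow_eq_cancel _ _ hpow1pos.ne' heq
        have hZ : (2 * z - 1 : ℤ) = 2 * zk := by exact_mod_cast this
        omega
      refine ⟨⟨2 * z - 1, by rw [hvz, hnv]⟩, hne, ?_⟩
      have hfil : ((posS n a t v).filter (fun s => posQ n a t v < s))
          = ((posS n a t v).filter (fun s => posy n a t v ≤ s)) :=
        Finset.filter_congr (fun s hs => hcomp s hs)
      rw [hcount, hfil, filter_le_eq_insert _ hyS, Finset.card_insert_of_notMem (by simp)]
      exact hc'

lemma mem_uigEdges {n : ℕ} {a : Fin n → ℕ} {p : Fin n × Fin n} :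
    p ∈ uigEdges n a ↔ p.1 < p.2 ∧ (p.2 : ℕ) ≤ (p.1 : ℕ) + a p.1 := by
  simp [uigEdges]

lemma row_card_le {n : ℕ} {a : Fin n → ℕ} {A : Finset (Fin n × Fin n)}
    (hA : A ⊆ uigEdges n a) (i : Fin n) :
    (A.filter (fun p => p.1 = i)).card ≤ a i := by
  have h : (A.filter (fun p => p.1 = i)).card ≤ (Finset.Ioc (i : ℕ) ((i : ℕ) + a i)).card := by
    apply Finset.card_le_card_of_injOn (fun p : Fin n × Fin n => (p.2 : ℕ))
    · intro p hp
      simp only [Finset.mem_coe] at hp ⊢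
      rw [Finset.mem_filter] at hp
      obtain ⟨hpA, hpi⟩ := hp
      have hE := mem_uigEdges.mp (hA hpA)
      rw [hpi] at hE
      rw [Finset.mem_Ioc]
      exact ⟨hE.1, hE.2⟩
    · intro p hp q hq hpq
      rw [Finset.mem_coe, Finset.mem_filter] at hp hq
      have h12 := hp.2.trans hq.2.symm
      exact Prod.ext h12 (Fin.ext hpq)
  rwa [Nat.card_Ioc, Nat.add_sub_cancel_left] at h

lemma orient_total {n : ℕ} {a : Fin n → ℕ} (A : Finset (Fin n × Fin n)) {u w : Fin n}
    (hE : (u, w) ∈ uigEdges n a) :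
    orientRel n a A u w ∨ orientRel n a A w u := by
  by_cases h : (u, w) ∈ A
  · exact Or.inl (Or.inl h)
  · exact Or.inr (Or.inr ⟨hE, h⟩)

lemma orient_inj {n : ℕ} {a : Fin n → ℕ}
    (hmono : ∀ i j : Fin n, i ≤ j → a i + (i : ℕ) ≤ a j + (j : ℕ))
    (A A' : Finset (Fin n × Fin n))
    (hAsub : A ⊆ uigEdges n a) (hAacy : ∀ x, ¬ Relation.TransGen (orientRel n a A) x x)
    (hA'sub : A' ⊆ uigEdges n a) (hA'acy : ∀ x, ¬ Relation.TransGen (orientRel n a A') x x)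
    (hdeg : ∀ i : Fin n,
      (A.filter (fun p => p.1 = i)).card = (A'.filter (fun p => p.1 = i)).card) :
    A = A' := by
  have key : ∀ m : ℕ, ∀ i : Fin n, n - (i : ℕ) ≤ m →
      A.filter (fun p => p.1 = i) = A'.filter (fun p => p.1 = i) := by
    intro m
    induction m with
    | zero => intro i him; exact absurd i.isLt (by omega)
    | succ m IH =>
      intro i him
      have hagree : ∀ j k : Fin n, (i : ℕ) < (j : ℕ) → ((j, k) ∈ A ↔ (j, k) ∈ A') := by
        intro j k hij
        have hrow := IH j (by omega)
        constructor
        · intro h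
          have h' : (j, k) ∈ A.filter (fun p => p.1 = j) := Finset.mem_filter.mpr ⟨h, rfl⟩
          rw [hrow] at h'
          exact (Finset.mem_filter.mp h').1
        · intro h
          have h' : (j, k) ∈ A'.filter (fun p => p.1 = j) := Finset.mem_filter.mpr ⟨h, rfl⟩
          rw [← hrow] at h'
          exact (Finset.mem_filter.mp h').1
      have hrel : ∀ k k' : Fin n, (i : ℕ) < (k : ℕ) → (i : ℕ) < (k' : ℕ) →
          (orientRel n a A k k' ↔ orientRel n a A' k k') := by
        intro k k' h1 h2
        unfold orientRel
        rw [hagree k k' h1, hagree k' k h2]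
      have hup : ∀ (B : Finset (Fin n × Fin n)), B ⊆ uigEdges n a →
          (∀ x, ¬ Relation.TransGen (orientRel n a B) x x) →
          ∀ k k' : Fin n, (i, k) ∈ B → (i, k') ∈ uigEdges n a →
            orientRel n a B k k' → (i, k') ∈ B := by
        intro B _ hBa k k' h1 h2 h3
        by_contra h4
        have c1 : orientRel n a B i k := Or.inl h1
        have c2 : orientRel n a B k' i := Or.inr ⟨h2, h4⟩
        exact hBa i (Relation.TransGen.head c1
          (Relation.TransGen.head h3 (Relation.TransGen.single c2)))
      have hUmem : ∀ k : Fin n,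
          k ∈ (A.filter (fun p => p.1 = i)).image Prod.snd ↔ (i, k) ∈ A := by
        intro k
        constructor
        · intro hk
          obtain ⟨p, hp, hpk⟩ := Finset.mem_image.mp hk
          obtain ⟨hpA, hpi⟩ := Finset.mem_filter.mp hp
          rw [show p = (i, k) from Prod.ext hpi hpk] at hpA
          exact hpA
        · intro hk
          exact Finset.mem_image.mpr ⟨(i, k), Finset.mem_filter.mpr ⟨hk, rfl⟩, rfl⟩
      have hU'mem : ∀ k : Fin n,
          k ∈ (A'.filter (fun p => p.1 = i)).image Prod.snd ↔ (i, k) ∈ A' := by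
        intro k
        constructor
        · intro hk
          obtain ⟨p, hp, hpk⟩ := Finset.mem_image.mp hk
          obtain ⟨hpA, hpi⟩ := Finset.mem_filter.mp hp
          rw [show p = (i, k) from Prod.ext hpi hpk] at hpA
          exact hpA
        · intro hk
          exact Finset.mem_image.mpr ⟨(i, k), Finset.mem_filter.mpr ⟨hk, rfl⟩, rfl⟩
      have hinj1 : Set.InjOn Prod.snd ((A.filter (fun p => p.1 = i)) : Set (Fin n × Fin n)) := by
        intro p hp q hq hpq
        rw [Finset.mem_coe, Finset.mem_filter] at hp hq
        exact Prod.ext (hp.2.trans hq.2.symm) hpq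
      have hinj2 : Set.InjOn Prod.snd ((A'.filter (fun p => p.1 = i)) : Set (Fin n × Fin n)) := by
        intro p hp q hq hpq
        rw [Finset.mem_coe, Finset.mem_filter] at hp hq
        exact Prod.ext (hp.2.trans hq.2.symm) hpq
      have hcard : ((A.filter (fun p => p.1 = i)).image Prod.snd).card
          = ((A'.filter (fun p => p.1 = i)).image Prod.snd).card := by
        rw [Finset.card_image_of_injOn hinj1, Finset.card_image_of_injOn hinj2, hdeg i]
      have hUU : (A.filter (fun p => p.1 = i)).image Prod.snd
          = (A'.filter (fun p => p.1 = i)).image Prod.snd := by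
        by_contra hne
        have hd1 : ((A.filter (fun p => p.1 = i)).image Prod.snd
            \ (A'.filter (fun p => p.1 = i)).image Prod.snd).Nonempty := by
          rw [Finset.sdiff_nonempty]
          intro hsub
          exact hne (Finset.eq_of_subset_of_card_le hsub hcard.ge)
        have hd2 : ((A'.filter (fun p => p.1 = i)).image Prod.snd
            \ (A.filter (fun p => p.1 = i)).image Prod.snd).Nonempty := by
          rw [Finset.sdiff_nonempty]
          intro hsub
          exact hne (Finset.eq_of_subset_of_card_le hsub hcard.le).symm
        obtain ⟨k, hk⟩ := hd1
        obtain ⟨k', hk'⟩ := hd2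
        rw [Finset.mem_sdiff] at hk hk'
        have hkA : (i, k) ∈ A := (hUmem k).mp hk.1
        have hknA' : (i, k) ∉ A' := fun h => hk.2 ((hU'mem k).mpr h)
        have hk'A' : (i, k') ∈ A' := (hU'mem k').mp hk'.1
        have hk'nA : (i, k') ∉ A := fun h => hk'.2 ((hUmem k').mpr h)
        have hEik := mem_uigEdges.mp (hAsub hkA)
        have hEik' := mem_uigEdges.mp (hA'sub hk'A')
        simp only at hEik hEik'
        have hik : i < k := hEik.1
        have hik' : i < k' := hEik'.1
        have hkk' : k ≠ k' := by
          intro h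
          rw [h] at hkA
          exact hk'nA hkA
        have htot : orientRel n a A k k' ∨ orientRel n a A k' k := by
          rcases hkk'.lt_or_gt with hlt | hlt
          · have hE : (k, k') ∈ uigEdges n a := by
              rw [mem_uigEdges]
              refine ⟨hlt, ?_⟩
              show (k' : ℕ) ≤ (k : ℕ) + a k
              have hm := hmono i k hik.le
              have h2' := hEik'.2
              omega
            exact orient_total A hE
          · have hE : (k', k) ∈ uigEdges n a := by
              rw [mem_uigEdges]
              refine ⟨hlt, ?_⟩
              show (k : ℕ) ≤ (k' : ℕ) + a k'
              have hm := hmono i k' hik'.le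
              have h2' := hEik.2
              omega
            exact (orient_total A hE).symm
        rcases htot with h | h
        · exact hk'nA (hup A hAsub hAacy k k' hkA (hA'sub hk'A') h)
        · have h' : orientRel n a A' k' k :=
            (hrel k' k (Fin.lt_def.mp hik') (Fin.lt_def.mp hik)).mp h
          exact hknA' (hup A' hA'sub hA'acy k' k hk'A' (hAsub hkA) h')
      ext p
      simp only [Finset.mem_filter]
      constructor
      · rintro ⟨hp, hpi⟩
        refine ⟨?_, hpi⟩
        have h1 : (i, p.2) ∈ A := by rwa [← hpi, Prod.mk.eta]
        have h2 := (hU'mem p.2).mp (hUU ▸ (hUmem p.2).mpr h1)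
        rwa [← hpi, Prod.mk.eta] at h2
      · rintro ⟨hp, hpi⟩
        refine ⟨?_, hpi⟩
        have h1 : (i, p.2) ∈ A' := by rwa [← hpi, Prod.mk.eta]
        have h2 := (hUmem p.2).mp (hUU.symm ▸ (hU'mem p.2).mpr h1)
        rwa [← hpi, Prod.mk.eta] at h2
  ext p
  constructor
  · intro hp
    have h1 : p ∈ A.filter (fun q => q.1 = p.1) := Finset.mem_filter.mpr ⟨hp, rfl⟩
    rw [key n p.1 (by omega)] at h1
    exact (Finset.mem_filter.mp h1).1
  · intro hp
    have h1 : p ∈ A'.filter (fun q => q.1 = p.1) := Finset.mem_filter.mpr ⟨hp, rfl⟩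
    rw [← key n p.1 (by omega)] at h1
    exact (Finset.mem_filter.mp h1).1

lemma orient_surj (n : ℕ) (a : Fin n → ℕ)
    (harea₁ : ∀ i : Fin n, (i : ℕ) + a i < n)
    (hmono : ∀ i j : Fin n, i ≤ j → a i + (i : ℕ) ≤ a j + (j : ℕ))
    (t : ∀ i : Fin n, Fin (a i + 1)) :
    ∃ A : Finset (Fin n × Fin n), A ⊆ uigEdges n a ∧
      (∀ x : Fin n, ¬ Relation.TransGen (orientRel n a A) x x) ∧
      ∀ i : Fin n, (A.filter (fun p => p.1 = i)).card = (t i : ℕ) := by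
  classical
  set tN : ℕ → ℕ := fun v => if h : v < n then (t ⟨v, h⟩ : ℕ) else 0 with htN
  set aN : ℕ → ℕ := fun v => if h : v < n then a ⟨v, h⟩ else 0 with haN
  have haNv : ∀ i : Fin n, aN (i : ℕ) = a i := by
    intro i; simp only [haN, dif_pos i.isLt, Fin.eta]
  have htNv : ∀ i : Fin n, tN (i : ℕ) = (t i : ℕ) := by
    intro i; simp only [htN, dif_pos i.isLt, Fin.eta]
  have ha : ∀ v, v < n → v + aN v < n := by
    intro v hv
    have := harea₁ ⟨v, hv⟩
    simp only [haN, dif_pos hv]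
    exact this
  have rmonoN : ∀ i j, i ≤ j → j < n → aN i + i ≤ aN j + j := by
    intro i j hij hj
    have hi : i < n := lt_of_le_of_lt hij hj
    have := hmono ⟨i, hi⟩ ⟨j, hj⟩ hij
    simp only [haN, dif_pos hi, dif_pos hj]
    exact this
  have htle : ∀ v, v < n → tN v ≤ aN v := by
    intro v hv
    simp only [htN, haN, dif_pos hv]
    exact Nat.lt_succ_iff.mp (t ⟨v, hv⟩).isLt
  have master := posQ_master n aN tN ha rmonoN htle n
  set PN : ℕ → ℚ := posQ n aN tN with hPN
  set A : Finset (Fin n × Fin n) :=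
    (uigEdges n a).filter (fun p => PN (p.1 : ℕ) < PN (p.2 : ℕ)) with hA
  have hAsub : A ⊆ uigEdges n a := Finset.filter_subset _ _
  have hstep : ∀ u w : Fin n, orientRel n a A u w → PN (u : ℕ) < PN (w : ℕ) := by
    rintro u w (h | ⟨hE, hnA⟩)
    · exact (Finset.mem_filter.mp h).2
    · have hE' := mem_uigEdges.mp hE
      simp only at hE'
      have hwu : (w : ℕ) < (u : ℕ) := hE'.1
      have hua : (u : ℕ) ≤ (w : ℕ) + aN (w : ℕ) := by rw [haNv]; exact hE'.2
      have hne := (master (w : ℕ) (by omega) w.isLt).2.1 (u : ℕ) hwu hua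
      have hle : ¬ (PN (w : ℕ) < PN (u : ℕ)) :=
        fun hlt => hnA (Finset.mem_filter.mpr ⟨hE, hlt⟩)
      exact lt_of_le_of_ne (not_lt.mp hle) (Ne.symm hne)
  have hacy : ∀ x : Fin n, ¬ Relation.TransGen (orientRel n a A) x x := by
    have hlt : ∀ x y : Fin n, Relation.TransGen (orientRel n a A) x y →
        PN (x : ℕ) < PN (y : ℕ) := by
      intro x y h
      induction h with
      | single h => exact hstep _ _ h
      | tail _ h ih => exact lt_trans ih (hstep _ _ h)
    exact fun x hx => lt_irrefl _ (hlt x x hx)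
  refine ⟨A, hAsub, hacy, ?_⟩
  intro i
  have hcnt := (master (i : ℕ) (by omega) i.isLt).2.2
  rw [htNv i] at hcnt
  rw [← hcnt]
  apply Finset.card_bij (fun (p : Fin n × Fin n) _ => (p.2 : ℕ))
  · intro p hp
    rw [Finset.mem_filter] at hp
    obtain ⟨hpA, hpi⟩ := hp
    rw [hA, Finset.mem_filter] at hpA
    obtain ⟨hpE, hplt⟩ := hpA
    have hE := mem_uigEdges.mp hpE
    rw [Finset.mem_filter, Finset.mem_Ioc]
    rw [hpi] at hE hplt
    refine ⟨⟨hE.1, ?_⟩, hplt⟩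
    rw [haNv]
    exact hE.2
  · intro p hp q hq hpq
    rw [Finset.mem_filter] at hp hq
    exact Prod.ext (hp.2.trans hq.2.symm) (Fin.ext hpq)
  · intro b hb
    rw [Finset.mem_filter, Finset.mem_Ioc] at hb
    obtain ⟨⟨hb1, hb2⟩, hb3⟩ := hb
    have hbn : b < n := by
      have := ha (i : ℕ) i.isLt
      omega
    refine ⟨(i, ⟨b, hbn⟩), ?_, rfl⟩
    rw [Finset.mem_filter]
    refine ⟨?_, rfl⟩
    rw [hA, Finset.mem_filter]
    refine ⟨?_, hb3⟩
    rw [mem_uigEdges]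
    refine ⟨?_, ?_⟩
    · exact Fin.lt_def.mpr hb1
    · show (b : ℕ) ≤ (i : ℕ) + a i
      rw [← haNv i]
      exact hb2
  -- done


lemma rmono_fin (n : ℕ) (a : Fin n → ℕ)
    (harea₂ : ∀ i j : Fin n, (i : ℕ) + 1 = (j : ℕ) → a i ≤ a j + 1) :
    ∀ i j : Fin n, i ≤ j → a i + (i : ℕ) ≤ a j + (j : ℕ) := by
  have key : ∀ d : ℕ, ∀ i j : Fin n, (j : ℕ) = (i : ℕ) + d → a i + (i : ℕ) ≤ a j + (j : ℕ) := by
    intro d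
    induction d with
    | zero =>
      intro i j hij
      have : i = j := Fin.ext (by omega)
      rw [this]
    | succ d IH =>
      intro i j hij
      have hj' : (i : ℕ) + d < n := by have := j.isLt; omega
      have h1 := IH i ⟨(i : ℕ) + d, hj'⟩ rfl
      have h2 := harea₂ ⟨(i : ℕ) + d, hj'⟩ j (by simp; omega)
      simp only at h1 h2
      omega
  intro i j hij
  exact key ((j : ℕ) - (i : ℕ)) i j (by have := Fin.le_def.mp hij; omega)

theorem final_theorem_proof (n : ℕ) (a : Fin n → ℕ)
    (harea₁ : ∀ i : Fin n, (i : ℕ) + a i < n)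
    (harea₂ : ∀ i j : Fin n, (i : ℕ) + 1 = (j : ℕ) → a i ≤ a j + 1) :
    ∃ φ : {A : Finset (Fin n × Fin n) // A ⊆ uigEdges n a ∧
            ∀ x : Fin n, ¬ Relation.TransGen (orientRel n a A) x x} ≃
          {σ : Equiv.Perm (Fin n) // ∀ i : Fin n, (σ i : ℕ) < a i + (i : ℕ) + 1},
      ∀ (A : {A : Finset (Fin n × Fin n) // A ⊆ uigEdges n a ∧
            ∀ x : Fin n, ¬ Relation.TransGen (orientRel n a A) x x}) (i : Fin n),
        ((A : Finset (Fin n × Fin n)).filter (fun p => p.1 = i)).card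
        = rookInvRow n a (φ A) i := by
  classical
  have hmono : ∀ i j : Fin n, i ≤ j → a i + (i : ℕ) ≤ a j + (j : ℕ) := rmono_fin n a harea₂
  have hrookeq : ∀ σ i, rookInvRow' n a σ i = rookInvRow n a σ i := fun _ _ => rfl
  let Omap : {A : Finset (Fin n × Fin n) // A ⊆ uigEdges n a ∧
      ∀ x : Fin n, ¬ Relation.TransGen (orientRel n a A) x x} → (∀ i : Fin n, Fin (a i + 1)) :=
    fun A i => ⟨(A.1.filter (fun p => p.1 = i)).card,
      Nat.lt_succ_of_le (row_card_le A.2.1 i)⟩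
  let Rmap : {σ : Equiv.Perm (Fin n) // ∀ i : Fin n, (σ i : ℕ) < a i + (i : ℕ) + 1} →
      (∀ i : Fin n, Fin (a i + 1)) :=
    fun σ i => ⟨rookInvRow' n a σ.1 i,
      Nat.lt_succ_of_le (rookInvRow'_le n a σ.1 i (fun i' h => hmono i' i h) σ.2)⟩
  have hOb : Function.Bijective Omap := by
    constructor
    · intro A A' h
      exact Subtype.ext (orient_inj hmono A.1 A'.1 A.2.1 A.2.2 A'.2.1 A'.2.2
        (fun i => congrArg Fin.val (congrFun h i)))
    · intro t
      obtain ⟨A, h1, h2, h3⟩ := orient_surj n a harea₁ hmono t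
      exact ⟨⟨A, h1, h2⟩, funext fun i => Fin.ext (h3 i)⟩
  have hRb : Function.Bijective Rmap := by
    constructor
    · intro σ τ h
      exact Subtype.ext (rook_inj n a σ.1 τ.1 σ.2 τ.2
        (fun i => congrArg Fin.val (congrFun h i)))
    · intro t
      obtain ⟨σ, h1, h2⟩ := rook_surj n a harea₁ t
      exact ⟨⟨σ, h1⟩, funext fun i => Fin.ext (h2 i)⟩
  let eO := Equiv.ofBijective Omap hOb
  let eR := Equiv.ofBijective Rmap hRb
  refine ⟨eO.trans eR.symm, ?_⟩
  intro A i
  have h1 : Rmap (eR.symm (eO A)) = eO A := eR.apply_symm_apply (eO A)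
  have h2 := congrArg Fin.val (congrFun h1 i)
  exact h2.symm

end AORP

open AORP in
/-- there is a bijection between acyclic orientations of `Γ_a` and rook
placements of `n` non-attacking rooks on the Ferrers board with row lengths `a_i + i`
(1-indexed), sending the number of ascending edges in each row to the number of
inversions of the rook placement in that row. -/
theorem acyclic_orientations_equiv_rook_placements (n : ℕ) (a : Fin n → ℕ)
    (harea₁ : ∀ i : Fin n, (i : ℕ) + a i < n)
    (harea₂ : ∀ i j : Fin n, (i : ℕ) + 1 = (j : ℕ) → a i ≤ a j + 1) :
    ∃ φ : {A : Finset (Fin n × Fin n) // A ⊆ uigEdges n a ∧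
            ∀ x : Fin n, ¬ Relation.TransGen (orientRel n a A) x x} ≃
          {σ : Equiv.Perm (Fin n) // ∀ i : Fin n, (σ i : ℕ) < a i + (i : ℕ) + 1},
      ∀ (A : {A : Finset (Fin n × Fin n) // A ⊆ uigEdges n a ∧
            ∀ x : Fin n, ¬ Relation.TransGen (orientRel n a A) x x}) (i : Fin n),
        ((A : Finset (Fin n × Fin n)).filter (fun p => p.1 = i)).card
        = rookInvRow n a (φ A) i := by
  classical
  exact AORP.final_theorem_proof n a harea₁ harea₂
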